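/- Fix n ≥ 1, d ≥ 1 and configurations x, y : Fin n → ℝ^d such that the 2n points x_1,…,x_n, y_1,…,y_n taken together are affinely independent (in particular d ≥ 2n−1). Then there exist a unit vector θ ∈ ℝ^d and θ-sorting permutations σ for x and τ for y with SWGG(x,y,θ;σ,τ) = W²(x,y); consequently the infimum min-SWGG(x,y) of SWGG(x,y,θ';σ',τ') over all unit vectors θ' and θ'-sorting permutations σ', τ' equals W²(x,y). -/

import Mathlib

open scoped RealInnerProductSpace

/-- The SWGG value associated to configurations `x, y` and permutations `σ, τ`:
`(1/n) Σ_i ‖x_{σ(i)} − y_{τ(i)}‖²`. -/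
noncomputable def SWGG {n d : ℕ} (x y : Fin n → EuclideanSpace ℝ (Fin d))
    (σ τ : Equiv.Perm (Fin n)) : ℝ :=
  (n : ℝ)⁻¹ * ∑ i, ‖x (σ i) - y (τ i)‖ ^ 2

/-- A permutation `σ` is θ-sorting for `x` if `i ↦ ⟨x_{σ(i)}, θ⟩` is nondecreasing. -/
def IsSorting {n d : ℕ} (θ : EuclideanSpace ℝ (Fin d))
    (x : Fin n → EuclideanSpace ℝ (Fin d)) (σ : Equiv.Perm (Fin n)) : Prop :=
  Monotone fun i => ⟪x (σ i), θ⟫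

/-- Squared 2-Wasserstein distance between the uniform empirical measures of `x` and `y`:
`(1/n) · min_ρ Σ_i ‖x_i − y_{ρ(i)}‖²`. -/
noncomputable def Wsq {n d : ℕ} (x y : Fin n → EuclideanSpace ℝ (Fin d)) : ℝ :=
  (n : ℝ)⁻¹ * ⨅ ρ : Equiv.Perm (Fin n), ∑ i, ‖x i - y (ρ i)‖ ^ 2

/-- `min-SWGG`: the infimum of `SWGG x y θ σ τ` over unit vectors `θ` and
θ-sorting permutations `σ` for `x`, `τ` for `y`. -/
noncomputable def minSWGG {n d : ℕ} (x y : Fin n → EuclideanSpace ℝ (Fin d)) : ℝ :=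
  sInf { r : ℝ | ∃ θ : EuclideanSpace ℝ (Fin d), ∃ σ τ : Equiv.Perm (Fin n),
    ‖θ‖ = 1 ∧ IsSorting θ x σ ∧ IsSorting θ y τ ∧ r = SWGG x y σ τ }

lemma exists_inner_eq {ι : Type*} [Fintype ι] {E : Type*} [NormedAddCommGroup E]
    [InnerProductSpace ℝ E] [FiniteDimensional ℝ E] {v : ι → E}
    (hv : LinearIndependent ℝ v) (w : ι → ℝ) : ∃ θ : E, ∀ k, ⟪v k, θ⟫ = w k := by
  set K := Submodule.span ℝ (Set.range v) with hK
  let b : Module.Basis ι ℝ K := Module.Basis.span hv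
  let f : K →ₗ[ℝ] ℝ := b.constr ℝ w
  let F : E →L[ℝ] ℝ := (LinearMap.toContinuousLinearMap f).comp (K.orthogonalProjection)
  haveI : CompleteSpace E := FiniteDimensional.complete ℝ E
  refine ⟨(InnerProductSpace.toDual ℝ E).symm F, fun k => ?_⟩
  have hmem : v k ∈ K := Submodule.subset_span ⟨k, rfl⟩
  have h1 : ⟪v k, (InnerProductSpace.toDual ℝ E).symm F⟫ = F (v k) := by
    rw [real_inner_comm]
    exact InnerProductSpace.toDual_symm_apply
  rw [h1]
  have h2 : K.orthogonalProjection (v k) = ⟨v k, hmem⟩ :=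
    Submodule.orthogonalProjection_mem_subspace_eq_self (⟨v k, hmem⟩ : K)
  have h3 : (⟨v k, hmem⟩ : K) = b k := by
    apply Subtype.ext
    exact congrArg Subtype.val (Module.Basis.span_apply hv k).symm
  show f (K.orthogonalProjection (v k)) = w k
  rw [h2, h3]
  exact Module.Basis.constr_basis b ℝ w k

/-- If the `2n` points `x_1, …, x_n, y_1, …, y_n` are affinely independent, then some unit
direction `θ` with θ-sorting permutations achieves the Wasserstein distance, so
`min-SWGG(x,y) = W²(x,y)`. -/
theorem minSWGG_eq_wsq_of_affineIndependent {n d : ℕ} (hn : 1 ≤ n) (hd : 1 ≤ d)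
    (x y : Fin n → EuclideanSpace ℝ (Fin d))
    (h : AffineIndependent ℝ (Sum.elim x y)) :
    (∃ (θ : EuclideanSpace ℝ (Fin d)) (σ τ : Equiv.Perm (Fin n)),
        ‖θ‖ = 1 ∧ IsSorting θ x σ ∧ IsSorting θ y τ ∧ SWGG x y σ τ = Wsq x y)
      ∧ minSWGG x y = Wsq x y := by
  classical
  haveI : Nonempty (Fin n) := ⟨⟨0, hn⟩⟩
  set f : Equiv.Perm (Fin n) → ℝ := fun ρ => ∑ i, ‖x i - y (ρ i)‖ ^ 2 with hf
  obtain ⟨ρ₀, hρ₀⟩ := Finite.exists_min f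
  have hWsq : Wsq x y = (n : ℝ)⁻¹ * f ρ₀ := by
    unfold Wsq
    congr 1
    exact le_antisymm (ciInf_le (Set.finite_range f).bddBelow ρ₀) (le_ciInf hρ₀)
  -- lower bound for any permutation pair
  have hlb : ∀ σ τ : Equiv.Perm (Fin n), Wsq x y ≤ SWGG x y σ τ := by
    intro σ τ
    rw [hWsq]
    unfold SWGG
    apply mul_le_mul_of_nonneg_left _ (by positivity)
    have hre : ∑ i, ‖x (σ i) - y (τ i)‖ ^ 2 = f (τ * σ⁻¹) := by
      show _ = ∑ j, ‖x j - y ((τ * σ⁻¹) j)‖ ^ 2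
      rw [← Equiv.sum_comp σ (fun j => ‖x j - y ((τ * σ⁻¹) j)‖ ^ 2)]
      simp [Equiv.Perm.mul_apply]
    rw [hre]
    exact hρ₀ _
  -- construct θ
  set p : Fin n ⊕ Fin n → EuclideanSpace ℝ (Fin d) := Sum.elim x y with hp
  set i0 : Fin n := ⟨0, hn⟩
  set k0 : Fin n ⊕ Fin n := Sum.inl i0 with hk0
  have hli := (affineIndependent_iff_linearIndependent_vsub ℝ p k0).mp h
  set g : Fin n ⊕ Fin n → ℝ :=
    Sum.elim (fun i => (i : ℝ)) (fun j => (ρ₀.symm j : ℝ) + 1/2) with hg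
  obtain ⟨θ₀, hθ₀⟩ := exists_inner_eq hli (fun k => g k.1 - g k0)
  have hkey : ∀ k, ⟪p k, θ₀⟫ = g k + (⟪p k0, θ₀⟫ - g k0) := by
    intro k
    by_cases hk : k = k0
    · subst hk; ring
    · have hv := hθ₀ ⟨k, hk⟩
      simp only [vsub_eq_sub, inner_sub_left] at hv
      linarith
  have hc0 : g k0 = 0 := by simp [hg, hk0, i0]
  have hθ₀ne : θ₀ ≠ 0 := by
    intro h0
    have h2 := hkey (Sum.inr (ρ₀ i0))
    rw [h0] at h2
    simp only [inner_zero_right] at h2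
    have hg2 : g (Sum.inr (ρ₀ i0)) = (i0 : ℝ) + 1/2 := by simp [hg]
    rw [hg2, hc0] at h2
    have hi0 : ((i0 : Fin n) : ℝ) = 0 := by simp [i0]
    rw [hi0] at h2
    linarith
  have hnorm : (0:ℝ) < ‖θ₀‖ := norm_pos_iff.mpr hθ₀ne
  set θ : EuclideanSpace ℝ (Fin d) := ‖θ₀‖⁻¹ • θ₀ with hθ
  have hunit : ‖θ‖ = 1 := by
    rw [hθ, norm_smul, norm_inv, norm_norm, inv_mul_cancel₀ hnorm.ne']
  have hinner : ∀ z : EuclideanSpace ℝ (Fin d), ⟪z, θ⟫ = ‖θ₀‖⁻¹ * ⟪z, θ₀⟫ := by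
    intro z; rw [hθ, real_inner_smul_right]
  set c : ℝ := ⟪p k0, θ₀⟫ - g k0 with hc
  have hx : ∀ i : Fin n, ⟪x i, θ⟫ = ‖θ₀‖⁻¹ * ((i : ℝ) + c) := by
    intro i
    rw [hinner]
    have := hkey (Sum.inl i)
    simp only [hp, Sum.elim_inl] at this
    rw [this]
    simp only [hg, Sum.elim_inl]
  have hy : ∀ i : Fin n, ⟪y (ρ₀ i), θ⟫ = ‖θ₀‖⁻¹ * ((i : ℝ) + 1/2 + c) := by
    intro i
    rw [hinner]
    have := hkey (Sum.inr (ρ₀ i))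
    simp only [hp, Sum.elim_inr] at this
    rw [this]
    simp only [hg, Sum.elim_inr, Equiv.symm_apply_apply]
    try ring
  have hsortx : IsSorting θ x 1 := by
    intro i j hij
    simp only [Equiv.Perm.one_apply, hx]
    apply mul_le_mul_of_nonneg_left _ (inv_nonneg.mpr hnorm.le)
    have : (i : ℝ) ≤ (j : ℝ) := by exact_mod_cast hij
    linarith
  have hsorty : IsSorting θ y ρ₀ := by
    intro i j hij
    simp only [hy]
    apply mul_le_mul_of_nonneg_left _ (inv_nonneg.mpr hnorm.le)
    have : (i : ℝ) ≤ (j : ℝ) := by exact_mod_cast hij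
    linarith
  have hval : SWGG x y 1 ρ₀ = Wsq x y := by
    rw [hWsq]
    unfold SWGG
    congr 1
    try simp [hf]
  refine ⟨⟨θ, 1, ρ₀, hunit, hsortx, hsorty, hval⟩, ?_⟩
  have hmem : Wsq x y ∈ { r : ℝ | ∃ θ : EuclideanSpace ℝ (Fin d),
      ∃ σ τ : Equiv.Perm (Fin n),
      ‖θ‖ = 1 ∧ IsSorting θ x σ ∧ IsSorting θ y τ ∧ r = SWGG x y σ τ } :=
    ⟨θ, 1, ρ₀, hunit, hsortx, hsorty, hval.symm⟩
  have hlb' : ∀ r ∈ { r : ℝ | ∃ θ : EuclideanSpace ℝ (Fin d),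
      ∃ σ τ : Equiv.Perm (Fin n),
      ‖θ‖ = 1 ∧ IsSorting θ x σ ∧ IsSorting θ y τ ∧ r = SWGG x y σ τ },
      Wsq x y ≤ r := by
    rintro r ⟨θ', σ', τ', -, -, -, rfl⟩
    exact hlb σ' τ'
  exact le_antisymm (csInf_le ⟨Wsq x y, hlb'⟩ hmem) (le_csInf ⟨Wsq x y, hmem⟩ hlb')
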